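/- Let Π be the two-phase reach-avoid problem on transition system S = (X,U,F) with running cost g, associated with nonempty A₁, A₂ ⊆ X and G₀ : X → [0,∞], with closed-loop performance L. Let Π₂ be the reach-avoid problem associated with A₂ and G₀ with closed-loop performance L₂, and let μ₂ be a memoryless controller optimal for Π₂. Let Π₁ be the reach-avoid problem associated with A₁ and terminal cost L₂(·,μ₂), with closed-loop performance L₁, and let μ₁ be a memoryless controller optimal for Π₁. Then for every controller μ* that is optimal for Π and every p ∈ X, L(p,μ*) ≥ L₁(p,μ₁). -/

import Mathlib

open scoped ENNReal Classical

namespace TwoPhase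

noncomputable section

variable {X U : Type*}

/-- The behaviour of the transition system `(X, U, F)` initialized at `p`:
`x 0 = p` and `x (t+1) ∈ F (x t) (u t)` for all `t`. -/
def Behaviour (F : X → U → Set X) (p : X) (u : ℕ → U) (x : ℕ → X) : Prop :=
  x 0 = p ∧ ∀ t, x (t + 1) ∈ F (x t) (u t)

/-- A general (history-dependent) controller, encoded as a map depending on the
time `t` and the full signals, required to be strict (nonempty valued) and causal:
its value at time `t` only depends on `x|[0;t]` and `u|[0;t)`. -/
def IsController (μ : ℕ → (ℕ → X) → (ℕ → U) → Set (U × Bool)) : Prop :=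
  (∀ t x u, (μ t x u).Nonempty) ∧
    ∀ (t : ℕ) (x x' : ℕ → X) (u u' : ℕ → U),
      (∀ s ≤ t, x s = x' s) → (∀ s < t, u s = u' s) → μ t x u = μ t x' u'

/-- The history-dependent controller induced by a memoryless controller. -/
def ofMemoryless (μ : X → Set (U × Bool)) : ℕ → (ℕ → X) → (ℕ → U) → Set (U × Bool) :=
  fun t x _ => μ (x t)

/-- The closed-loop behaviour `B_p(μ × S)`. -/
def ClosedLoop (F : X → U → Set X) (μ : ℕ → (ℕ → X) → (ℕ → U) → Set (U × Bool))
    (p : X) (u : ℕ → U) (v : ℕ → Bool) (x : ℕ → X) : Prop :=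
  Behaviour F p u x ∧ ∀ t, (u t, v t) ∈ μ t x u

/-- The total cost `J(u,v,x)` associated with running cost `g` and
trajectory cost `G` (where `G T x` is the cost of the finite trajectory `x|[0;T]`):
if `v` is not identically `0` and `T = min v⁻¹(1)`, it is
`∑_{t<T} g (x t) (x (t+1)) (u t) + G T x`; otherwise it is `∞`. -/
def totalCost (g : X → X → U → ℝ≥0∞) (G : ℕ → (ℕ → X) → ℝ≥0∞)
    (u : ℕ → U) (v : ℕ → Bool) (x : ℕ → X) : ℝ≥0∞ :=
  if h : ∃ t, v t = true then
    (∑ t ∈ Finset.range (Nat.find h), g (x t) (x (t + 1)) (u t)) + G (Nat.find h) x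
  else ⊤

/-- The closed-loop performance `L(p, μ)` of the optimal control problem
`(X, U, F, G, g)`. -/
def perf (F : X → U → Set X) (g : X → X → U → ℝ≥0∞) (G : ℕ → (ℕ → X) → ℝ≥0∞)
    (μ : ℕ → (ℕ → X) → (ℕ → U) → Set (U × Bool)) (p : X) : ℝ≥0∞ :=
  ⨆ (u : ℕ → U) (v : ℕ → Bool) (x : ℕ → X) (_ : ClosedLoop F μ p u v x),
    totalCost g G u v x

/-- The value function `V(p)` of the optimal control problem `(X, U, F, G, g)`. -/
def value (F : X → U → Set X) (g : X → X → U → ℝ≥0∞) (G : ℕ → (ℕ → X) → ℝ≥0∞)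
    (p : X) : ℝ≥0∞ :=
  ⨅ (μ : ℕ → (ℕ → X) → (ℕ → U) → Set (U × Bool)) (_ : IsController μ),
    perf F g G μ p

/-- The (terminal) trajectory cost of the reach-avoid problem associated with `A`
and `G₀`. -/
def reachAvoidCost (A : Set X) (G₀ : X → ℝ≥0∞) : ℕ → (ℕ → X) → ℝ≥0∞ :=
  fun T x => if x T ∈ A then G₀ (x T) else ⊤

/-- The trajectory cost of the two-phase reach-avoid problem associated with
`A₁`, `A₂` and `G₀`. -/
def twoPhaseCost (A₁ A₂ : Set X) (G₀ : X → ℝ≥0∞) : ℕ → (ℕ → X) → ℝ≥0∞ :=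
  fun t x => if (∃ s ≤ t, x s ∈ A₁) ∧ x t ∈ A₂ then G₀ (x t) else ⊤

/-- A trajectory cost which is a terminal cost `G : X → [0,∞]`. -/
def termCost (G : X → ℝ≥0∞) : ℕ → (ℕ → X) → ℝ≥0∞ := fun T x => G (x T)

/-- The stopping component of a memoryless controller is single-valued. -/
def SVStop (μ : X → Set (U × Bool)) : Prop :=
  ∀ q : X, (∀ w ∈ μ q, w.2 = false) ∨ (∀ w ∈ μ q, w.2 = true)

/-- The composed controller `μ` of Proposition 1: it plays `μ₁` as long as the
stopping signal `w` of `μ₁` along `x` satisfies `w s = 0` for all `s ∈ [0;t]`,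
and plays `μ₂` afterwards. -/
def composed (μ₁ μ₂ : X → Set (U × Bool)) :
    ℕ → (ℕ → X) → (ℕ → U) → Set (U × Bool) :=
  fun t x _ =>
    if ∀ s ≤ t, ∀ w ∈ μ₁ (x s), w.2 = false then μ₁ (x t) else μ₂ (x t)

/-- The refined controller `μ' ∘ Q` of a memoryless abstract controller `μ'`,
where `Q` is the quantizer: `(μ' ∘ Q) p = ⋃_{Ω ∈ X', p ∈ Ω} μ' Ω`. -/
def refineCtrl {XA : Set (Set X)} {UA : Set U} (μ' : ↥XA → Set (↥UA × Bool)) :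
    X → Set (U × Bool) :=
  fun p => ⋃ (Ω : ↥XA) (_ : p ∈ (Ω : Set X)),
    (fun w : ↥UA × Bool => ((w.1 : U), w.2)) '' μ' Ω

end

end TwoPhase


namespace TwoPhase

section Aux

variable {X U : Type*}

/-- One-step extension machine: `extQ ... k` refines the initial triple of
signals by choosing, for `k` steps starting at time `N`, admissible control
values and successor states. -/
noncomputable def extQ (F : X → U → Set X) (hF : ∀ a b, (F a b).Nonempty)
    (μ : ℕ → (ℕ → X) → (ℕ → U) → Set (U × Bool))
    (hμ : ∀ t x u, (μ t x u).Nonempty) (N : ℕ)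
    (xuv : (ℕ → X) × (ℕ → U) × (ℕ → Bool)) :
    ℕ → (ℕ → X) × (ℕ → U) × (ℕ → Bool)
  | 0 => xuv
  | k + 1 =>
    let P := extQ F hF μ hμ N xuv k
    let w := (hμ (N + k) P.1 P.2.1).choose
    (Function.update P.1 (N + k + 1) (hF (P.1 (N + k)) w.1).choose,
      Function.update P.2.1 (N + k) w.1,
      Function.update P.2.2 (N + k) w.2)

/-- Any finite admissible history extends to a full closed loop. -/
lemma exists_closedLoop_extend (F : X → U → Set X)
    (hF : ∀ a b, (F a b).Nonempty)
    (μ : ℕ → (ℕ → X) → (ℕ → U) → Set (U × Bool)) (hμ : IsController μ)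
    (N : ℕ) (x : ℕ → X) (u : ℕ → U) (v : ℕ → Bool)
    (hxF : ∀ t < N, x (t + 1) ∈ F (x t) (u t))
    (hmem : ∀ t < N, (u t, v t) ∈ μ t x u) :
    ∃ u' v' x', ClosedLoop F μ (x 0) u' v' x' ∧
      (∀ s ≤ N, x' s = x s) ∧ (∀ s < N, u' s = u s) ∧ ∀ s < N, v' s = v s := by
  classical
  set Q : ℕ → (ℕ → X) × (ℕ → U) × (ℕ → Bool) := extQ F hF μ hμ.1 N (x, u, v) with hQ
  have hQsucc : ∀ k, Q (k + 1) =
      (Function.update (Q k).1 (N + k + 1)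
          (hF ((Q k).1 (N + k)) ((hμ.1 (N + k) (Q k).1 (Q k).2.1).choose).1).choose,
        Function.update (Q k).2.1 (N + k) ((hμ.1 (N + k) (Q k).1 (Q k).2.1).choose).1,
        Function.update (Q k).2.2 (N + k) ((hμ.1 (N + k) (Q k).1 (Q k).2.1).choose).2) := by
    intro k; rw [hQ]; rfl
  have C1 : ∀ k k', k ≤ k' → ∀ s, s ≤ N + k → (Q k').1 s = (Q k).1 s := by
    intro k k' hk
    induction k', hk using Nat.le_induction with
    | base => intro s _; rfl
    | succ k' hk ih =>
      intro s hs
      rw [hQsucc k']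
      simp only
      rw [Function.update_of_ne (by omega)]
      exact ih s hs
  have C2 : ∀ k k', k ≤ k' → ∀ s, s < N + k → (Q k').2.1 s = (Q k).2.1 s := by
    intro k k' hk
    induction k', hk using Nat.le_induction with
    | base => intro s _; rfl
    | succ k' hk ih =>
      intro s hs
      rw [hQsucc k']
      simp only
      rw [Function.update_of_ne (by omega)]
      exact ih s hs
  have C3 : ∀ k k', k ≤ k' → ∀ s, s < N + k → (Q k').2.2 s = (Q k).2.2 s := by
    intro k k' hk
    induction k', hk using Nat.le_induction with
    | base => intro s _; rfl
    | succ k' hk ih =>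
      intro s hs
      rw [hQsucc k']
      simp only
      rw [Function.update_of_ne (by omega)]
      exact ih s hs
  -- the limit signals
  set x' : ℕ → X := fun s => (Q s).1 s with hx'def
  set u' : ℕ → U := fun s => (Q (s + 1)).2.1 s with hu'def
  set v' : ℕ → Bool := fun s => (Q (s + 1)).2.2 s with hv'def
  have hx' : ∀ k s, s ≤ N + k → (Q k).1 s = x' s := by
    intro k s hs
    rcases le_total k s with h | h
    · exact (C1 k s h s hs).symm
    · exact C1 s k h s (Nat.le_add_left s N)
  have hu' : ∀ k s, s < N + k → (Q k).2.1 s = u' s := by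
    intro k s hs
    rcases le_total k (s + 1) with h | h
    · exact (C2 k (s + 1) h s hs).symm
    · exact C2 (s + 1) k h s (by omega)
  have hv' : ∀ k s, s < N + k → (Q k).2.2 s = v' s := by
    intro k s hs
    rcases le_total k (s + 1) with h | h
    · exact (C3 k (s + 1) h s hs).symm
    · exact C3 (s + 1) k h s (by omega)
  have hxpre : ∀ s ≤ N, x' s = x s := by
    intro s hs
    have := hx' 0 s (by omega)
    rw [← this]; rfl
  have hupre : ∀ s < N, u' s = u s := by
    intro s hs
    have := hu' 0 s (by omega)
    rw [← this]; rfl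
  have hvpre : ∀ s < N, v' s = v s := by
    intro s hs
    have := hv' 0 s (by omega)
    rw [← this]; rfl
  -- step facts for t ≥ N
  have hstep : ∀ k, u' (N + k) = ((hμ.1 (N + k) (Q k).1 (Q k).2.1).choose).1 ∧
      v' (N + k) = ((hμ.1 (N + k) (Q k).1 (Q k).2.1).choose).2 ∧
      x' (N + k + 1) =
        (hF ((Q k).1 (N + k)) ((hμ.1 (N + k) (Q k).1 (Q k).2.1).choose).1).choose := by
    intro k
    refine ⟨?_, ?_, ?_⟩
    · rw [← hu' (k + 1) (N + k) (by omega), hQsucc k]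
      simp only
      rw [Function.update_self]
    · rw [← hv' (k + 1) (N + k) (by omega), hQsucc k]
      simp only
      rw [Function.update_self]
    · rw [← hx' (k + 1) (N + k + 1) (by omega), hQsucc k]
      simp only
      rw [Function.update_self]
  refine ⟨u', v', x', ⟨⟨hxpre 0 (Nat.zero_le N), ?_⟩, ?_⟩, hxpre, hupre, hvpre⟩
  · -- transitions
    intro t
    rcases lt_or_ge t N with ht | ht
    · rw [hxpre t (le_of_lt ht), hxpre (t + 1) (by omega), hupre t ht]
      exact hxF t ht
    · obtain ⟨k, rfl⟩ := Nat.exists_eq_add_of_le ht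
      obtain ⟨h1, _, h3⟩ := hstep k
      rw [h3, h1, hx' k (N + k) le_rfl]
      exact (hF (x' (N + k)) _).choose_spec
  · -- controller membership
    intro t
    rcases lt_or_ge t N with ht | ht
    · have he : μ t x' u' = μ t x u :=
        hμ.2 t x' x u' u (fun s hs => hxpre s (le_trans hs (le_of_lt ht)))
          (fun s hs => hupre s (lt_of_lt_of_le hs (le_of_lt ht)))
      rw [he, hupre t ht, hvpre t ht]
      exact hmem t ht
    · obtain ⟨k, rfl⟩ := Nat.exists_eq_add_of_le ht
      obtain ⟨h1, h2, _⟩ := hstep k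
      have he : μ (N + k) (Q k).1 (Q k).2.1 = μ (N + k) x' u' :=
        hμ.2 (N + k) (Q k).1 x' (Q k).2.1 u' (fun s hs => hx' k s hs)
          (fun s hs => hu' k s hs)
      rw [h1, h2, ← he]
      exact (hμ.1 (N + k) (Q k).1 (Q k).2.1).choose_spec

lemma totalCost_le_perf {F : X → U → Set X} {g : X → X → U → ℝ≥0∞}
    {G : ℕ → (ℕ → X) → ℝ≥0∞} {μ : ℕ → (ℕ → X) → (ℕ → U) → Set (U × Bool)}
    {p : X} {u : ℕ → U} {v : ℕ → Bool} {x : ℕ → X}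
    (h : ClosedLoop F μ p u v x) : totalCost g G u v x ≤ perf F g G μ p :=
  le_iSup_of_le u <| le_iSup_of_le v <| le_iSup_of_le x <| le_iSup_of_le h le_rfl

/-- The auxiliary controller for `Π₁` built from `μ*`: play (the `0`-flagged
part of) `μ*` while `A₁` has not been visited, and stop upon the first visit. -/
noncomputable def nuCtrl [Nonempty U] (A₁ : Set X)
    (μ : ℕ → (ℕ → X) → (ℕ → U) → Set (U × Bool)) :
    ℕ → (ℕ → X) → (ℕ → U) → Set (U × Bool) :=
  fun t x u =>
    if ∃ s ≤ t, x s ∈ A₁ then {(Classical.arbitrary U, true)}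
    else if ∃ w ∈ μ t x u, w.2 = false then {w ∈ μ t x u | w.2 = false}
    else {(Classical.arbitrary U, false)}

lemma isController_nuCtrl [Nonempty U] (A₁ : Set X)
    (μ : ℕ → (ℕ → X) → (ℕ → U) → Set (U × Bool)) (hμ : IsController μ) :
    IsController (nuCtrl A₁ μ) := by
  constructor
  · intro t x u
    unfold nuCtrl
    split_ifs with h1 h2
    · exact ⟨_, rfl⟩
    · obtain ⟨w, hw, hw2⟩ := h2
      exact ⟨w, hw, hw2⟩
    · exact ⟨_, rfl⟩
  · intro t x x' u u' hx hu
    have h1 : μ t x u = μ t x' u' := hμ.2 t x x' u u' hx hu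
    have h2 : (∃ s ≤ t, x s ∈ A₁) ↔ ∃ s ≤ t, x' s ∈ A₁ := by
      constructor
      · rintro ⟨s, hs, h⟩; exact ⟨s, hs, by rwa [← hx s hs]⟩
      · rintro ⟨s, hs, h⟩; exact ⟨s, hs, by rwa [hx s hs]⟩
    unfold nuCtrl
    rw [h1, if_congr h2 rfl rfl]

/-- The conditioned controller: the tail of `μ` after the history `(x,u)`
up to time `T₁`. -/
def condCtrl (μ : ℕ → (ℕ → X) → (ℕ → U) → Set (U × Bool)) (T₁ : ℕ)
    (x : ℕ → X) (u : ℕ → U) : ℕ → (ℕ → X) → (ℕ → U) → Set (U × Bool) :=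
  fun t x' u' =>
    μ (T₁ + t) (fun s => if s < T₁ then x s else x' (s - T₁))
      (fun s => if s < T₁ then u s else u' (s - T₁))

lemma isController_condCtrl (μ : ℕ → (ℕ → X) → (ℕ → U) → Set (U × Bool))
    (hμ : IsController μ) (T₁ : ℕ) (x : ℕ → X) (u : ℕ → U) :
    IsController (condCtrl μ T₁ x u) := by
  constructor
  · intro t x' u'; exact hμ.1 _ _ _
  · intro t x₁ x₂ u₁ u₂ hx hu
    unfold condCtrl
    refine hμ.2 _ _ _ _ _ ?_ ?_
    · intro s hs
      by_cases h : s < T₁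
      · simp [h]
      · simp only [if_neg h]
        exact hx (s - T₁) (by omega)
    · intro s hs
      by_cases h : s < T₁
      · simp [h]
      · simp only [if_neg h]
        exact hu (s - T₁) (by omega)

end Aux

end TwoPhase

namespace TwoPhase

/-- key inequality in the proof of Theorem 1.  With `Π`,
`Π₁`, `Π₂` as in Proposition 1, `μ₂` a memoryless controller optimal for `Π₂`
and `μ₁` a memoryless controller optimal for `Π₁`, every controller `μ*`
that is optimal for `Π` satisfies `L(p,μ*) ≥ L₁(p,μ₁)` for all `p ∈ X`. -/
theorem perf_optimal_ge
    {X U : Type*} [Nonempty X] [Nonempty U]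
    (F : X → U → Set X) (hF : ∀ x u, (F x u).Nonempty)
    (g : X → X → U → ℝ≥0∞) (G₀ : X → ℝ≥0∞)
    (A₁ A₂ : Set X) (hA₁ : A₁.Nonempty) (hA₂ : A₂.Nonempty)
    (μ₂ : X → Set (U × Bool)) (hμ₂ : ∀ q, (μ₂ q).Nonempty)
    (hopt₂ : ∀ q, perf F g (reachAvoidCost A₂ G₀) (ofMemoryless μ₂) q =
      value F g (reachAvoidCost A₂ G₀) q)
    (μ₁ : X → Set (U × Bool)) (hμ₁ : ∀ q, (μ₁ q).Nonempty)
    (hopt₁ : ∀ q, perf F g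
        (reachAvoidCost A₁
          (fun r => perf F g (reachAvoidCost A₂ G₀) (ofMemoryless μ₂) r))
        (ofMemoryless μ₁) q =
      value F g
        (reachAvoidCost A₁
          (fun r => perf F g (reachAvoidCost A₂ G₀) (ofMemoryless μ₂) r)) q)
    (μStar : ℕ → (ℕ → X) → (ℕ → U) → Set (U × Bool)) (hμStar : IsController μStar)
    (hoptStar : ∀ q, perf F g (twoPhaseCost A₁ A₂ G₀) μStar q =
      value F g (twoPhaseCost A₁ A₂ G₀) q)
    (p : X) :
    perf F g (twoPhaseCost A₁ A₂ G₀) μStar p ≥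
      perf F g
        (reachAvoidCost A₁
          (fun q => perf F g (reachAvoidCost A₂ G₀) (ofMemoryless μ₂) q))
        (ofMemoryless μ₁) p := by
  classical
  rw [ge_iff_le, hopt₁ p]
  set ν := nuCtrl A₁ μStar with hν
  have hνC : IsController ν := isController_nuCtrl A₁ μStar hμStar
  simp only [value]
  refine le_trans (iInf₂_le ν hνC) ?_
  simp only [perf]
  refine iSup_le fun u => iSup_le fun v => iSup_le fun x => iSup_le fun hcl => ?_
  by_cases hLtop : perf F g (twoPhaseCost A₁ A₂ G₀) μStar p = ⊤
  · exact le_of_le_of_eq le_top hLtop.symm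
  obtain ⟨⟨hx0, hxF'⟩, hmem⟩ := hcl
  -- Claim A: before the first visit of `A₁`, the loop follows `μ*` with flag 0.
  have claimA : ∀ t, ¬(∃ s ≤ t, x s ∈ A₁) →
      (u t, v t) ∈ μStar t x u ∧ v t = false := by
    intro t
    induction t using Nat.strong_induction_on with
    | _ t ih =>
      intro hno
      have hmt := hmem t
      rw [hν] at hmt
      unfold nuCtrl at hmt
      rw [if_neg hno] at hmt
      by_cases hfb : ∃ w ∈ μStar t x u, w.2 = false
      · rw [if_pos hfb] at hmt
        exact ⟨hmt.1, hmt.2⟩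
      · exfalso
        obtain ⟨⟨a, b⟩, hab⟩ := hμStar.1 t x u
        rcases Bool.eq_false_or_eq_true b with hb | hb
        swap
        · exact hfb ⟨(a, b), hab, hb⟩
        subst hb
        set u2 : ℕ → U := fun s => if s = t then a else u s with hu2
        set v2 : ℕ → Bool := fun s => if s = t then true else v s with hv2
        set x2 : ℕ → X := fun s => if s = t + 1 then (hF (x t) a).choose else x s
          with hx2
        have hx2eq : ∀ s ≤ t, x2 s = x s := by
          intro s hs; simp only [hx2]; rw [if_neg (by omega)]
        have hu2eq : ∀ s < t, u2 s = u s := by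
          intro s hs; simp only [hu2]; rw [if_neg (by omega)]
        have hv2eq : ∀ s < t, v2 s = v s := by
          intro s hs; simp only [hv2]; rw [if_neg (by omega)]
        have hμeq : ∀ s ≤ t, μStar s x2 u2 = μStar s x u :=
          fun s hs => hμStar.2 s x2 x u2 u (fun r hr => hx2eq r (le_trans hr hs))
            (fun r hr => hu2eq r (lt_of_lt_of_le hr hs))
        have hside1 : ∀ s < t + 1, x2 (s + 1) ∈ F (x2 s) (u2 s) := by
          intro s hs
          rcases Nat.lt_succ_iff_lt_or_eq.mp hs with h | rfl
          · rw [hx2eq (s + 1) (by omega), hx2eq s (by omega), hu2eq s h]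
            exact hxF' s
          · have e1 : x2 (s + 1) = (hF (x s) a).choose := by
              simp [hx2]
            have e2 : u2 s = a := by simp [hu2]
            rw [e1, e2, hx2eq s le_rfl]
            exact (hF (x s) a).choose_spec
        have hside2 : ∀ s < t + 1, (u2 s, v2 s) ∈ μStar s x2 u2 := by
          intro s hs
          rcases Nat.lt_succ_iff_lt_or_eq.mp hs with h | rfl
          · rw [hμeq s (le_of_lt h), hu2eq s h, hv2eq s h]
            exact (ih s h (fun ⟨r, hr, hrA⟩ =>
              hno ⟨r, le_trans hr (le_of_lt h), hrA⟩)).1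
          · have e2 : u2 s = a := by simp [hu2]
            have e3 : v2 s = true := by simp [hv2]
            rw [hμeq s le_rfl, e2, e3]
            exact hab
        obtain ⟨u', v', x', hcl', hxag, huag, hvag⟩ :=
          exists_closedLoop_extend F hF μStar hμStar (t + 1) x2 u2 v2 hside1 hside2
        have hx20 : x2 0 = p := by rw [hx2eq 0 (Nat.zero_le t)]; exact hx0
        rw [hx20] at hcl'
        have hcost := totalCost_le_perf (g := g) (G := twoPhaseCost A₁ A₂ G₀) hcl'
        have hex : ∃ s, v' s = true := by
          refine ⟨t, ?_⟩
          rw [hvag t (Nat.lt_succ_self t)]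
          simp [hv2]
        have hvlt : ∀ s < t, v' s = false := by
          intro s hs
          rw [hvag s (by omega), hv2eq s hs]
          exact (ih s hs (fun ⟨r, hr, hrA⟩ =>
            hno ⟨r, le_trans hr (le_of_lt hs), hrA⟩)).2
        have hfind : Nat.find hex = t := by
          rw [Nat.find_eq_iff]
          refine ⟨?_, fun s hs => by rw [hvlt s hs]; simp⟩
          rw [hvag t (Nat.lt_succ_self t)]
          simp [hv2]
        have htop : totalCost g (twoPhaseCost A₁ A₂ G₀) u' v' x' = ⊤ := by
          rw [totalCost, dif_pos hex, hfind]
          have h2 : twoPhaseCost A₁ A₂ G₀ t x' = ⊤ := by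
            simp only [twoPhaseCost]
            rw [if_neg]
            rintro ⟨⟨s, hs, hsA⟩, -⟩
            exact hno ⟨s, hs, by rwa [hxag s (by omega), hx2eq s hs] at hsA⟩
          rw [h2, add_top]
        rw [htop] at hcost
        exact hLtop (top_le_iff.mp hcost)
  by_cases hhit : ∃ t, x t ∈ A₁
  swap
  · exfalso
    have hnow : ∀ t, ¬(∃ s ≤ t, x s ∈ A₁) :=
      fun t ⟨s, _, hsA⟩ => hhit ⟨s, hsA⟩
    have hcost := totalCost_le_perf (g := g) (G := twoPhaseCost A₁ A₂ G₀)
      (⟨⟨hx0, hxF'⟩, fun t => (claimA t (hnow t)).1⟩ :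
        ClosedLoop F μStar p u v x)
    rw [totalCost, dif_neg] at hcost
    · exact hLtop (top_le_iff.mp hcost)
    · rintro ⟨s, hs⟩
      rw [(claimA s (hnow s)).2] at hs
      simp at hs
  -- main case
  have hT₁A : x (Nat.find hhit) ∈ A₁ := Nat.find_spec hhit
  set T₁ := Nat.find hhit with hT₁
  have hTub : ∀ s < T₁, x s ∉ A₁ := fun s hs => Nat.find_min hhit hs
  have hpre : ∀ t < T₁, (u t, v t) ∈ μStar t x u ∧ v t = false := by
    intro t ht
    refine claimA t ?_
    rintro ⟨s, hs, hsA⟩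
    exact hTub s (lt_of_le_of_lt hs ht) hsA
  have hvT : v T₁ = true := by
    have hmT := hmem T₁
    rw [hν] at hmT
    unfold nuCtrl at hmT
    rw [if_pos ⟨T₁, le_rfl, hT₁A⟩, Set.mem_singleton_iff] at hmT
    exact (Prod.ext_iff.mp hmT).2
  have hex : ∃ t, v t = true := ⟨T₁, hvT⟩
  have hfind : Nat.find hex = T₁ := by
    rw [Nat.find_eq_iff]
    exact ⟨hvT, fun s hs => by rw [(hpre s hs).2]; simp⟩
  rw [totalCost, dif_pos hex, hfind]
  simp only [reachAvoidCost]
  rw [if_pos hT₁A]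
  set Sig1 := ∑ t ∈ Finset.range T₁, g (x t) (x (t + 1)) (u t) with hSig
  have hSigL : Sig1 ≤ perf F g (twoPhaseCost A₁ A₂ G₀) μStar p := by
    obtain ⟨u', v', x', hcl', hxag, huag, hvag⟩ :=
      exists_closedLoop_extend F hF μStar hμStar T₁ x u v (fun t _ => hxF' t)
        (fun t ht => (hpre t ht).1)
    rw [hx0] at hcl'
    refine le_trans ?_ (totalCost_le_perf hcl')
    rw [totalCost]
    by_cases hex' : ∃ s, v' s = true
    · rw [dif_pos hex']
      have hTge : T₁ ≤ Nat.find hex' := by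
        by_contra h
        push_neg at h
        have hsp := Nat.find_spec hex'
        rw [hvag _ h, (hpre _ h).2] at hsp
        simp at hsp
      calc Sig1 = ∑ t ∈ Finset.range T₁, g (x' t) (x' (t + 1)) (u' t) := by
            refine Finset.sum_congr rfl fun t ht => ?_
            rw [Finset.mem_range] at ht
            rw [hxag t (le_of_lt ht), hxag (t + 1) ht, huag t ht]
        _ ≤ ∑ t ∈ Finset.range (Nat.find hex'), g (x' t) (x' (t + 1)) (u' t) :=
            Finset.sum_le_sum_of_subset (Finset.range_subset_range.mpr hTge)
        _ ≤ _ := le_self_add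
    · rw [dif_neg hex']; exact le_top
  have hSigtop : Sig1 ≠ ⊤ := by
    intro h
    rw [h] at hSigL
    exact hLtop (top_le_iff.mp hSigL)
  set ν₂ := condCtrl μStar T₁ x u with hν₂
  have hν₂C := isController_condCtrl μStar hμStar T₁ x u
  have hperf₂ : perf F g (reachAvoidCost A₂ G₀) ν₂ (x T₁) ≤
      perf F g (twoPhaseCost A₁ A₂ G₀) μStar p - Sig1 := by
    simp only [perf]
    refine iSup_le fun u' => iSup_le fun w' => iSup_le fun x' => iSup_le fun hcl' => ?_
    refine ENNReal.le_sub_of_add_le_left hSigtop ?_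
    obtain ⟨⟨hx'0, hx'F⟩, hmem'⟩ := hcl'
    set XX : ℕ → X := fun s => if s < T₁ then x s else x' (s - T₁) with hXX
    set UU : ℕ → U := fun s => if s < T₁ then u s else u' (s - T₁) with hUU
    set VV : ℕ → Bool := fun s => if s < T₁ then v s else w' (s - T₁) with hVV
    have hXXle : ∀ s ≤ T₁, XX s = x s := by
      intro s hs
      simp only [hXX]
      by_cases h : s < T₁
      · rw [if_pos h]
      · have hst : s = T₁ := le_antisymm hs (le_of_not_gt h)
        rw [if_neg h, hst, Nat.sub_self]
        exact hx'0
    have hXXadd : ∀ k, XX (T₁ + k) = x' k := by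
      intro k
      simp only [hXX]
      rw [if_neg (by omega)]
      congr 1
      omega
    have hUUlt : ∀ s < T₁, UU s = u s := by
      intro s hs; simp only [hUU]; rw [if_pos hs]
    have hUUadd : ∀ k, UU (T₁ + k) = u' k := by
      intro k
      simp only [hUU]
      rw [if_neg (by omega)]
      congr 1
      omega
    have hVVlt : ∀ s < T₁, VV s = v s := by
      intro s hs; simp only [hVV]; rw [if_pos hs]
    have hVVadd : ∀ k, VV (T₁ + k) = w' k := by
      intro k
      simp only [hVV]
      rw [if_neg (by omega)]
      congr 1
      omega
    have hclS : ClosedLoop F μStar p UU VV XX := by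
      refine ⟨⟨?_, ?_⟩, ?_⟩
      · rw [hXXle 0 (Nat.zero_le T₁)]; exact hx0
      · intro t
        rcases lt_or_ge t T₁ with ht | ht
        · rw [hXXle t (le_of_lt ht), hXXle (t + 1) ht, hUUlt t ht]
          exact hxF' t
        · obtain ⟨k, rfl⟩ := Nat.exists_eq_add_of_le ht
          rw [hXXadd k, hUUadd k, show T₁ + k + 1 = T₁ + (k + 1) from rfl,
            hXXadd (k + 1)]
          exact hx'F k
      · intro t
        rcases lt_or_ge t T₁ with ht | ht
        · have he : μStar t XX UU = μStar t x u :=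
            hμStar.2 t XX x UU u (fun s hs => hXXle s (le_trans hs (le_of_lt ht)))
              (fun s hs => hUUlt s (lt_trans hs ht))
          rw [hUUlt t ht, hVVlt t ht, he]
          exact (hpre t ht).1
        · obtain ⟨k, rfl⟩ := Nat.exists_eq_add_of_le ht
          have hm := hmem' k
          rw [hν₂] at hm
          unfold condCtrl at hm
          rw [hUUadd k, hVVadd k, hXX, hUU]
          exact hm
    have hcostS := totalCost_le_perf (g := g) (G := twoPhaseCost A₁ A₂ G₀) hclS
    refine le_trans ?_ hcostS
    simp only [totalCost]
    by_cases hex' : ∃ τ, w' τ = true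
    · rw [dif_pos hex']
      have hexS : ∃ s, VV s = true :=
        ⟨T₁ + Nat.find hex', by rw [hVVadd]; exact Nat.find_spec hex'⟩
      rw [dif_pos hexS]
      have hfindS : Nat.find hexS = T₁ + Nat.find hex' := by
        rw [Nat.find_eq_iff]
        refine ⟨by rw [hVVadd]; exact Nat.find_spec hex', ?_⟩
        intro s hs
        rcases lt_or_ge s T₁ with h | h
        · rw [hVVlt s h, (hpre s h).2]; simp
        · obtain ⟨k, rfl⟩ := Nat.exists_eq_add_of_le h
          rw [hVVadd k]
          simpa using Nat.find_min hex' (by omega)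
      rw [hfindS, Finset.sum_range_add]
      have e1 : ∑ t ∈ Finset.range T₁, g (XX t) (XX (t + 1)) (UU t) = Sig1 := by
        refine Finset.sum_congr rfl fun t ht => ?_
        rw [Finset.mem_range] at ht
        rw [hXXle t (le_of_lt ht), hXXle (t + 1) ht, hUUlt t ht]
      have e2 : ∀ k, g (XX (T₁ + k)) (XX (T₁ + k + 1)) (UU (T₁ + k)) =
          g (x' k) (x' (k + 1)) (u' k) := by
        intro k
        rw [hXXadd k, hUUadd k, show T₁ + k + 1 = T₁ + (k + 1) from rfl,
          hXXadd (k + 1)]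
      rw [e1, Finset.sum_congr rfl (fun k _ => e2 k)]
      have ecost : reachAvoidCost A₂ G₀ (Nat.find hex') x' ≤
          twoPhaseCost A₁ A₂ G₀ (T₁ + Nat.find hex') XX := by
        simp only [reachAvoidCost, twoPhaseCost]
        rw [hXXadd]
        by_cases hA2 : x' (Nat.find hex') ∈ A₂
        · rw [if_pos hA2, if_pos ⟨⟨T₁, Nat.le_add_right T₁ _,
            by rw [hXXle T₁ le_rfl]; exact hT₁A⟩, hA2⟩]
        · rw [if_neg hA2, if_neg (fun h => hA2 h.2)]
      calc Sig1 + ((∑ t ∈ Finset.range (Nat.find hex'),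
              g (x' t) (x' (t + 1)) (u' t)) +
            reachAvoidCost A₂ G₀ (Nat.find hex') x')
          = (Sig1 + ∑ t ∈ Finset.range (Nat.find hex'),
              g (x' t) (x' (t + 1)) (u' t)) +
            reachAvoidCost A₂ G₀ (Nat.find hex') x' := (add_assoc _ _ _).symm
        _ ≤ _ := add_le_add_right ecost _
    · rw [dif_neg hex']
      have hnS : ¬∃ s, VV s = true := by
        rintro ⟨s, hs⟩
        rcases lt_or_ge s T₁ with h | h
        · rw [hVVlt s h, (hpre s h).2] at hs
          simp at hs
        · obtain ⟨k, rfl⟩ := Nat.exists_eq_add_of_le h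
          rw [hVVadd k] at hs
          exact hex' ⟨k, hs⟩
      rw [dif_neg hnS]
      exact le_top
  have hL₂le : perf F g (reachAvoidCost A₂ G₀) (ofMemoryless μ₂) (x T₁) ≤
      perf F g (twoPhaseCost A₁ A₂ G₀) μStar p - Sig1 := by
    rw [hopt₂ (x T₁)]
    simp only [value]
    exact le_trans (iInf₂_le ν₂ hν₂C) hperf₂
  calc Sig1 + perf F g (reachAvoidCost A₂ G₀) (ofMemoryless μ₂) (x T₁)
      ≤ Sig1 + (perf F g (twoPhaseCost A₁ A₂ G₀) μStar p - Sig1) :=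
        add_le_add_right hL₂le Sig1
    _ = perf F g (twoPhaseCost A₁ A₂ G₀) μStar p := add_tsub_cancel_of_le hSigL


end TwoPhase
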